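/- Let k ≥ 2 and ℓ ≥ k be integers and let T be a tournament whose vertex set is the disjoint union of sets W_1, …, W_k with |W_i| = 12·k^22·ℓ² for each i ∈ [k]. Suppose B ⊆ W_1 is a set of size ℓ that is contained in a (4, m, kℓ)-nearly-regular subset of T (for some integer m) on which every vertex satisfies d⁻(v) ≤ d⁺(v) ≤ 4·d⁻(v), and suppose no T₂K⃗_ℓ sits on B. Then there is a partition [k] = I ∪ J with |I| ≥ k/10 and |J| ≥ k/10, and subsets W'_i ⊆ W_i with |W'_i| ≥ |W_i|/10 for each i ∈ [k], such that every edge of T between ⋃_{i∈I} W'_i and ⋃_{j∈J} W'_j is directed from ⋃_{i∈I} W'_i to ⋃_{j∈J} W'_j. -/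

import Mathlib

/-- A tournament: a loopless digraph on a finite vertex set in which, for every pair of
distinct vertices `x, y`, exactly one of the edges `(x,y)`, `(y,x)` is present. -/
def IsTournament {V : Type} (G : V → V → Prop) : Prop :=
  (∀ v, ¬ G v v) ∧ ∀ x y : V, x ≠ y → (G x y ↔ ¬ G y x)

/-- The interior of a path, i.e. the path with its first and last vertices removed. -/
def listInterior {V : Type} (p : List V) : List V := p.tail.dropLast

/-- `IsT2K G ℓ B P` says that the branch set `B` together with the paths `P a b` (for ordered
pairs of distinct `a, b ∈ B`) forms a copy of `T₂K⃗_ℓ` in `G`: `B` has `ℓ` vertices; for each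
ordered pair `(a, b)` of distinct branch vertices, `P a b` is a directed path from `a` to `b`
of length at most `3` (at most `4` vertices) whose interior avoids `B`; and the paths are
pairwise internally vertex-disjoint. -/
def IsT2K {V : Type} (G : V → V → Prop) (ℓ : ℕ) (B : Finset V) (P : V → V → List V) : Prop :=
  B.card = ℓ ∧
  (∀ a ∈ B, ∀ b ∈ B, a ≠ b →
    (P a b).Nodup ∧ (P a b).Chain' G ∧ (P a b).head? = some a ∧
    (P a b).getLast? = some b ∧ (P a b).length ≤ 4 ∧
    ∀ v ∈ listInterior (P a b), v ∉ B) ∧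
  (∀ a ∈ B, ∀ b ∈ B, ∀ c ∈ B, ∀ d ∈ B, a ≠ b → c ≠ d → (a, b) ≠ (c, d) →
    ∀ v ∈ listInterior (P a b), v ∉ listInterior (P c d))

/-- A copy of `T₂K⃗_ℓ` sits on a vertex set `X` if its branch vertex set is a subset of `X`.
`SitsOn G ℓ X` says that some copy of `T₂K⃗_ℓ` in `G` sits on `X`. -/
def SitsOn {V : Type} (G : V → V → Prop) (ℓ : ℕ) (X : Finset V) : Prop :=
  ∃ (B : Finset V) (P : V → V → List V), IsT2K G ℓ B P ∧ B ⊆ X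

/-- The vertex set of a copy of `T₂K⃗_ℓ` given by branch set `B` and paths `P`. -/
def copyVerts {V : Type} (B : Finset V) (P : V → V → List V) : Set V :=
  {v | v ∈ B ∨ ∃ a ∈ B, ∃ b ∈ B, a ≠ b ∧ v ∈ P a b}

/-- The out-degree of a vertex. -/
noncomputable def outDeg {V : Type} (G : V → V → Prop) (v : V) : ℕ := {u | G v u}.ncard

/-- The in-degree of a vertex. -/
noncomputable def inDeg {V : Type} (G : V → V → Prop) (v : V) : ℕ := {u | G u v}.ncard

def Link {V : Type} (G : V → V → Prop) (a b : V) (U : Finset V) : Prop :=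
  ∃ p : List V, p.Nodup ∧ p.Chain' G ∧ p.head? = some a ∧ p.getLast? = some b ∧
    p.length ≤ 4 ∧ ∀ v ∈ listInterior p, v ∉ U

def Good {V : Type} (G : V → V → Prop) (B : Finset V) (a b : V) (p : List V) : Prop :=
  p.Nodup ∧ p.Chain' G ∧ p.head? = some a ∧ p.getLast? = some b ∧ p.length ≤ 4 ∧
    ∀ v ∈ listInterior p, v ∉ B

lemma interior_len {V : Type} (p : List V) : (listInterior p).length = p.length - 2 := by
  simp [listInterior]; omega

lemma exists_T2K {V : Type} (G : V → V → Prop) (ℓ : ℕ) (B : Finset V)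
    (hBcard : B.card = ℓ)
    (hlink : ∀ a ∈ B, ∀ b ∈ B, a ≠ b → ∀ U : Finset V, B ⊆ U → U.card ≤ 3 * ℓ ^ 2 →
      Link G a b U) : SitsOn G ℓ B := by
  classical
  set D := (B ×ˢ B).filter (fun p => p.1 ≠ p.2) with hD
  have hDcard : D.card ≤ ℓ ^ 2 := by
    calc D.card ≤ (B ×ˢ B).card := Finset.card_filter_le _ _
    _ = ℓ ^ 2 := by rw [Finset.card_product, hBcard]; ring
  have key : ∀ S : Finset (V × V), S ⊆ D →
      ∃ P : V → V → List V,
        (∀ p ∈ S, Good G B p.1 p.2 (P p.1 p.2)) ∧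
        (∀ p ∈ S, ∀ q ∈ S, p ≠ q →
          ∀ v ∈ listInterior (P p.1 p.2), v ∉ listInterior (P q.1 q.2)) ∧
        (S.biUnion (fun p => (listInterior (P p.1 p.2)).toFinset)).card ≤ 2 * S.card := by
    intro S
    induction S using Finset.induction_on with
    | empty => intro _; exact ⟨fun _ _ => [], by simp, by simp, by simp⟩
    | @insert a S ha IH =>
      intro hsub
      obtain ⟨P, h1, h2, h3⟩ := IH (fun x hx => hsub (Finset.mem_insert_of_mem hx))
      set T := S.biUnion (fun p => (listInterior (P p.1 p.2)).toFinset) with hT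
      set U := B ∪ T with hU
      have haD : a ∈ D := hsub (Finset.mem_insert_self a S)
      have haB : a.1 ∈ B ∧ a.2 ∈ B ∧ a.1 ≠ a.2 := by
        simp only [hD, Finset.mem_filter, Finset.mem_product] at haD
        exact ⟨haD.1.1, haD.1.2, haD.2⟩
      have hScard : S.card ≤ ℓ ^ 2 - 1 := by
        have : S ⊆ D.erase a := by
          intro x hx
          exact Finset.mem_erase.2 ⟨fun h => ha (h ▸ hx), hsub (Finset.mem_insert_of_mem hx)⟩
        have := Finset.card_le_card this
        rw [Finset.card_erase_of_mem haD] at this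
        omega
      have hUcard : U.card ≤ 3 * ℓ ^ 2 := by
        have h1 : U.card ≤ B.card + T.card := Finset.card_union_le _ _
        have h2 : T.card ≤ 2 * S.card := h3
        have hl : ℓ ≥ 1 := by
          have : (0 : ℕ) < B.card := Finset.card_pos.2 ⟨a.1, haB.1⟩
          omega
        have : ℓ ≤ ℓ ^ 2 := by nlinarith
        omega
      obtain ⟨p, hp1, hp2, hp3, hp4, hp5, hp6⟩ :=
        hlink a.1 haB.1 a.2 haB.2.1 haB.2.2 U Finset.subset_union_left hUcard
      set PP : V → V → List V := fun x y => if (x, y) = (a.1, a.2) then p else P x y with hPP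
      have hPPa : PP a.1 a.2 = p := by simp [hPP]
      have hPPs : ∀ s ∈ S, PP s.1 s.2 = P s.1 s.2 := by
        intro s hs
        have hne : (s.1, s.2) ≠ (a.1, a.2) := by
          intro h
          have hsa : s = a := Prod.ext (congrArg Prod.fst h) (congrArg Prod.snd h)
          exact ha (hsa ▸ hs)
        simp [hPP, hne]
      refine ⟨PP, ?_, ?_, ?_⟩
      · intro q hq
        rcases Finset.mem_insert.1 hq with hqa | hqS
        · subst hqa
          rw [hPPa]
          exact ⟨hp1, hp2, hp3, hp4, hp5, fun v hv => fun hvB => hp6 v hv (Finset.mem_union_left _ hvB)⟩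
        · rw [hPPs q hqS]
          exact h1 q hqS
      · intro q hq r hr hqr v hv
        have hmemT : ∀ s ∈ S, ∀ w ∈ listInterior (P s.1 s.2), w ∈ T := by
          intro s hs w hw
          exact Finset.mem_biUnion.2 ⟨s, hs, List.mem_toFinset.2 hw⟩
        rcases Finset.mem_insert.1 hq with hqa | hqS
        · subst hqa
          rcases Finset.mem_insert.1 hr with hra | hrS
          · exact absurd (hra ▸ rfl) hqr
          · rw [hPPa] at hv
            rw [hPPs r hrS]
            intro hvr
            exact hp6 v hv (Finset.mem_union_right _ (hmemT r hrS v hvr))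
        · rcases Finset.mem_insert.1 hr with hra | hrS
          · subst hra
            rw [hPPs q hqS] at hv
            rw [hPPa]
            intro hvr
            exact hp6 v hvr (Finset.mem_union_right _ (hmemT q hqS v hv))
          · rw [hPPs q hqS] at hv
            rw [hPPs r hrS]
            exact h2 q hqS r hrS hqr v hv
      · rw [Finset.biUnion_insert]
        have hcard1 : ((listInterior (PP a.1 a.2)).toFinset).card ≤ 2 := by
          rw [hPPa]
          calc (listInterior p).toFinset.card ≤ (listInterior p).length := List.toFinset_card_le _
          _ ≤ 2 := by rw [interior_len]; omega
        have heq : (S.biUnion fun q => (listInterior (PP q.1 q.2)).toFinset) = T := by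
          apply Finset.biUnion_congr rfl
          intro s hs
          rw [hPPs s hs]
        rw [heq]
        calc _ ≤ (listInterior (PP a.1 a.2)).toFinset.card + T.card := Finset.card_union_le _ _
        _ ≤ 2 + 2 * S.card := by omega
        _ = 2 * (insert a S).card := by rw [Finset.card_insert_of_notMem ha]; ring
  obtain ⟨P, h1, h2, _⟩ := key D (subset_refl D)
  refine ⟨B, P, ⟨hBcard, ?_, ?_⟩, subset_refl B⟩
  · intro a haB b hbB hab
    have : (a, b) ∈ D := by simp [hD, Finset.mem_filter, Finset.mem_product, haB, hbB, hab]
    exact h1 (a, b) this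
  · intro a haB b hbB c hcB d hdB hab hcd hne v hv
    have h1' : (a, b) ∈ D := by simp [hD, Finset.mem_filter, Finset.mem_product, haB, hbB, hab]
    have h2' : (c, d) ∈ D := by simp [hD, Finset.mem_filter, Finset.mem_product, hcB, hdB, hcd]
    exact h2 (a, b) h1' (c, d) h2' hne v hv

lemma notLink_facts {V : Type} (G : V → V → Prop) (a b : V) (U : Finset V)
    (hab : a ≠ b) (haU : a ∈ U) (hbU : b ∈ U) (h : ¬ Link G a b U) :
    ¬ G a b ∧ (∀ v, v ∉ U → ¬(G a v ∧ G v b)) ∧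
      (∀ u v, u ∉ U → v ∉ U → u ≠ v → ¬(G a u ∧ G u v ∧ G v b)) := by
  refine ⟨?_, ?_, ?_⟩
  · intro hGab
    exact h ⟨[a, b], by simp [hab], by simp [List.Chain', hGab], by simp, by simp, by simp, by
      simp [listInterior]⟩
  · intro v hvU ⟨h1, h2⟩
    have hva : v ≠ a := fun hh => hvU (hh ▸ haU)
    have hvb : v ≠ b := fun hh => hvU (hh ▸ hbU)
    refine h ⟨[a, v, b], ?_, ?_, by simp, by simp, by simp, ?_⟩
    · simp [hab, hva.symm, hvb]
    · simp [List.Chain', h1, h2]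
    · intro x hx
      simp [listInterior] at hx
      subst hx; exact hvU
  · intro u v huU hvU huv ⟨h1, h2, h3⟩
    have hua : u ≠ a := fun hh => huU (hh ▸ haU)
    have hub : u ≠ b := fun hh => huU (hh ▸ hbU)
    have hva : v ≠ a := fun hh => hvU (hh ▸ haU)
    have hvb : v ≠ b := fun hh => hvU (hh ▸ hbU)
    refine h ⟨[a, u, v, b], ?_, ?_, by simp, by simp, by simp, ?_⟩
    · simp [hab, hua.symm, huv, hub, hva.symm, hvb]
    · simp [List.Chain', h1, h2, h3]
    · intro x hx
      simp [listInterior] at hx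
      rcases hx with rfl | rfl
      · exact huU
      · exact hvU

/-- If the vertex set of a tournament is the disjoint union of `W₁, …, W_k`, each of size
exactly `12 k²² ℓ²` (with `2 ≤ k ≤ ℓ`), and `B ⊆ W₁` is a set of size `ℓ` contained in a
`(4, m, kℓ)`-nearly-regular set on which every vertex `v` satisfies
`d⁻(v) ≤ d⁺(v) ≤ 4 d⁻(v)`, and no `T₂K⃗_ℓ` sits on `B`, then there is a partition
`[k] = I ∪ J` with `|I|, |J| ≥ k/10` and subsets `W'_i ⊆ W_i` with `|W'_i| ≥ |W_i|/10` such
that all edges between `⋃_{i ∈ I} W'_i` and `⋃_{j ∈ J} W'_j` go from the former to the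
latter. -/
theorem inductive_partition {V : Type} [Fintype V] (G : V → V → Prop) (hT : IsTournament G)
    (k ℓ : ℕ) (hk : 2 ≤ k) (hkℓ : k ≤ ℓ)
    (W : Fin k → Finset V)
    (hdisj : ∀ i j, i ≠ j → Disjoint (W i) (W j))
    (hcover : ∀ v : V, ∃ i, v ∈ W i)
    (hsize : ∀ i, (W i).card = 12 * k ^ 22 * ℓ ^ 2)
    (B A : Finset V) (m : ℤ)
    (hBA : B ⊆ A) (hBW : B ⊆ W ⟨0, by omega⟩) (hBcard : B.card = ℓ)
    (hreg : ∀ v ∈ A, inDeg G v ≤ outDeg G v ∧ outDeg G v ≤ 4 * inDeg G v)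
    (hm : ∀ v ∈ A, m - 10 * (k * ℓ) ≤ (inDeg G v : ℤ) ∧ (inDeg G v : ℤ) ≤ m + 10 * (k * ℓ))
    (hnosub : ¬ SitsOn G ℓ B) :
    ∃ I J : Finset (Fin k),
      Disjoint I J ∧ I ∪ J = Finset.univ ∧
      k ≤ 10 * I.card ∧ k ≤ 10 * J.card ∧
      ∃ W' : Fin k → Finset V,
        (∀ i, W' i ⊆ W i) ∧ (∀ i, (W i).card ≤ 10 * (W' i).card) ∧
        ∀ i ∈ I, ∀ j ∈ J, ∀ a ∈ W' i, ∀ b ∈ W' j, G a b := by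
  classical
  obtain ⟨hirr, hasym⟩ := hT
  set n := Fintype.card V with hn
  set w := 12 * k ^ 22 * ℓ ^ 2 with hw
  have hl2 : 2 ≤ ℓ := le_trans hk hkℓ
  have hwbig : 1000 * ℓ ^ 2 ≤ w := by
    have h1 : 2 ^ 22 ≤ k ^ 22 := Nat.pow_le_pow_left hk 22
    have h3 : (1000 : ℕ) ≤ 12 * k ^ 22 := by
      have h2 : (84 : ℕ) ≤ 2 ^ 22 := by norm_num
      calc (1000 : ℕ) ≤ 12 * 84 := by norm_num
      _ ≤ 12 * k ^ 22 := Nat.mul_le_mul_left 12 (le_trans h2 h1)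
    rw [hw]
    exact Nat.mul_le_mul_right (ℓ ^ 2) h3
  have hkll : k * ℓ ≤ ℓ ^ 2 := by
    calc k * ℓ ≤ ℓ * ℓ := Nat.mul_le_mul_right ℓ hkℓ
    _ = ℓ ^ 2 := (sq ℓ).symm
  have hlsq1 : (1:ℕ) ≤ ℓ ^ 2 := by
    calc (1:ℕ) = 1 * 1 := rfl
    _ ≤ ℓ * ℓ := Nat.mul_le_mul (by omega) (by omega)
    _ = ℓ ^ 2 := (sq ℓ).symm
  -- the fiber function
  choose f hf using hcover
  have hfiber : ∀ (v : V) (i : Fin k), v ∈ W i ↔ f v = i := by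
    intro v i
    constructor
    · intro hv
      by_contra hne
      exact Finset.disjoint_left.1 (hdisj i (f v) (fun hh => hne hh.symm)) hv (hf v)
    · rintro rfl; exact hf v
  have hsum : ∀ X : Finset V, X.card = ∑ i : Fin k, (X ∩ W i).card := by
    intro X
    rw [Finset.card_eq_sum_card_fiberwise (f := f) (t := Finset.univ)
      (fun x _ => Finset.mem_univ (f x))]
    apply Finset.sum_congr rfl
    intro i _
    congr 1
    ext v
    simp only [Finset.mem_filter, Finset.mem_inter]
    exact and_congr_right fun _ => (hfiber v i).symm
  have hnkw : n = k * w := by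
    have h1 : (Finset.univ : Finset V).card = ∑ i : Fin k, ((Finset.univ : Finset V) ∩ W i).card :=
      hsum _
    simp only [Finset.univ_inter, hsize] at h1
    rw [hn, ← Finset.card_univ, h1]
    simp [Finset.sum_const, Finset.card_univ]
  -- degrees as filter cards
  have houtd : ∀ v : V, outDeg G v = (Finset.univ.filter (fun u => G v u)).card := by
    intro v
    rw [outDeg, Set.ncard_eq_toFinset_card']
    congr 1
    ext u
    simp
  have hind : ∀ v : V, inDeg G v = (Finset.univ.filter (fun u => G u v)).card := by
    intro v
    rw [inDeg, Set.ncard_eq_toFinset_card']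
    congr 1
    ext u
    simp
  have hdegsum : ∀ v : V, outDeg G v + inDeg G v + 1 = n := by
    intro v
    have hdisj' : Disjoint (Finset.univ.filter (fun u => G v u))
        (Finset.univ.filter (fun u => G u v)) := by
      rw [Finset.disjoint_left]
      intro u hu1 hu2
      simp only [Finset.mem_filter] at hu1 hu2
      rcases eq_or_ne u v with rfl | hne
      · exact hirr u hu1.2
      · exact ((hasym v u hne.symm).1 hu1.2) hu2.2
    have hunion : Finset.univ.filter (fun u => G v u) ∪ Finset.univ.filter (fun u => G u v) =
        Finset.univ.erase v := by
      ext u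
      simp only [Finset.mem_union, Finset.mem_filter, Finset.mem_erase, Finset.mem_univ,
        true_and, and_true]
      constructor
      · rintro (h | h)
        · intro hh; subst hh; exact hirr u h
        · intro hh; subst hh; exact hirr u h
      · intro hne
        by_cases hvu : G v u
        · exact Or.inl hvu
        · refine Or.inr ?_
          by_contra huv
          exact hvu ((hasym v u (fun hh => hne hh.symm)).2 huv)
    rw [houtd, hind, ← Finset.card_union_of_disjoint hdisj', hunion,
      Finset.card_erase_of_mem (Finset.mem_univ v), Finset.card_univ, ← hn]
    have : 1 ≤ n := by
      rw [hn]
      exact Fintype.card_pos_iff.2 ⟨v⟩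
    omega
  -- obstruction extraction
  have hobs : ∃ a ∈ B, ∃ b ∈ B, a ≠ b ∧ ∃ U : Finset V, B ⊆ U ∧ U.card ≤ 3 * ℓ ^ 2 ∧
      ¬ Link G a b U := by
    by_contra hcon
    push_neg at hcon
    exact hnosub (exists_T2K G ℓ B hBcard fun a ha b hb hab U hBU hU =>
      hcon a ha b hb hab U hBU hU)
  obtain ⟨a, haB, b, hbB, hab, U, hBU, hUcard, hnl⟩ := hobs
  have haA := hBA haB
  have hbA := hBA hbB
  obtain ⟨hfact1, hfact2, hfact3⟩ := notLink_facts G a b U hab (hBU haB) (hBU hbB) hnl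
  set X := Finset.univ.filter (fun v => G a v ∧ v ∉ U) with hX
  set Y := Finset.univ.filter (fun v => G v b ∧ v ∉ U) with hY
  have hXYdisj : Disjoint X Y := by
    rw [Finset.disjoint_left]
    intro v hv1 hv2
    simp only [hX, hY, Finset.mem_filter, Finset.mem_univ, true_and] at hv1 hv2
    exact hfact2 v hv1.2 ⟨hv1.1, hv2.1⟩
  have hdom : ∀ v ∈ Y, ∀ u ∈ X, G v u := by
    intro v hv u hu
    have hne : u ≠ v := by
      rintro rfl
      exact Finset.disjoint_left.1 hXYdisj hu hv
    simp only [hX, hY, Finset.mem_filter, Finset.mem_univ, true_and] at hv hu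
    by_contra hvu
    have huv : G u v := (hasym u v hne).2 hvu
    exact hfact3 u v hu.2 hv.2 hne ⟨hu.1, huv, hv.1⟩
  have hXcard : outDeg G a ≤ X.card + U.card := by
    rw [houtd]
    have hsub : Finset.univ.filter (fun u => G a u) ⊆ X ∪ U := by
      intro v hv
      simp only [Finset.mem_filter] at hv
      by_cases hvU : v ∈ U
      · exact Finset.mem_union_right _ hvU
      · exact Finset.mem_union_left _ (by simp [hX, hv.2, hvU])
    calc _ ≤ (X ∪ U).card := Finset.card_le_card hsub
    _ ≤ _ := Finset.card_union_le _ _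
  have hYcard : inDeg G b ≤ Y.card + U.card := by
    rw [hind]
    have hsub : Finset.univ.filter (fun u => G u b) ⊆ Y ∪ U := by
      intro v hv
      simp only [Finset.mem_filter] at hv
      by_cases hvU : v ∈ U
      · exact Finset.mem_union_right _ hvU
      · exact Finset.mem_union_left _ (by simp [hY, hv.2, hvU])
    calc _ ≤ (Y ∪ U).card := Finset.card_le_card hsub
    _ ≤ _ := Finset.card_union_le _ _
  have hda := hreg a haA
  have hdb := hreg b hbA
  have hma := hm a haA
  have hmb := hm b hbA
  have hab20 : inDeg G a ≤ inDeg G b + 20 * (k * ℓ) := by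
    have h1 : (inDeg G a : ℤ) ≤ ((inDeg G b + 20 * (k * ℓ) : ℕ) : ℤ) := by
      push_cast
      linarith [hma.2, hmb.1]
    exact_mod_cast h1
  have hXYtotal : n ≤ X.card + Y.card + 20 * (k * ℓ) + 6 * ℓ ^ 2 + 1 := by
    have h1 := hdegsum a
    linarith [hXcard, hYcard, hab20, hUcard]
  have hYlow : 2 * n ≤ 10 * Y.card + 30 * ℓ ^ 2 + 2 := by
    have h1 := hdegsum b
    linarith [hdb.2, hYcard, hUcard]
  have hXlow : 5 * n ≤ 10 * X.card + 30 * ℓ ^ 2 + 5 := by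
    have h1 := hdegsum a
    linarith [hda.1, hXcard, hUcard]
  have hycap : ∀ i, (Y ∩ W i).card ≤ w := fun i => by
    calc (Y ∩ W i).card ≤ (W i).card := Finset.card_le_card Finset.inter_subset_right
    _ = w := hsize i
  have hxcap : ∀ i, (X ∩ W i).card ≤ w := fun i => by
    calc (X ∩ W i).card ≤ (W i).card := Finset.card_le_card Finset.inter_subset_right
    _ = w := hsize i
  have hxyw : ∀ i, (X ∩ W i).card + (Y ∩ W i).card ≤ w := by
    intro i
    have hd : Disjoint (X ∩ W i) (Y ∩ W i) :=
      hXYdisj.mono Finset.inter_subset_left Finset.inter_subset_left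
    rw [← Finset.card_union_of_disjoint hd]
    refine le_trans (Finset.card_le_card ?_) (le_of_eq (hsize i))
    intro v hv
    rcases Finset.mem_union.1 hv with h | h
    exacts [(Finset.mem_inter.1 h).2, (Finset.mem_inter.1 h).2]
  have hpp : ∀ i, w ≤ (X ∩ W i).card + (Y ∩ W i).card + 27 * ℓ ^ 2 := by
    intro i
    have h1 : X.card = ∑ j, (X ∩ W j).card := hsum X
    have h2 : Y.card = ∑ j, (Y ∩ W j).card := hsum Y
    have h3 : ∑ j, ((X ∩ W j).card + (Y ∩ W j).card) = (X ∩ W i).card + (Y ∩ W i).card +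
        ∑ j ∈ Finset.univ.erase i, ((X ∩ W j).card + (Y ∩ W j).card) := by
      rw [← Finset.add_sum_erase _ _ (Finset.mem_univ i)]
    have h4 : ∑ j ∈ Finset.univ.erase i, ((X ∩ W j).card + (Y ∩ W j).card) ≤
        (Finset.univ.erase i).card * w := by
      have := Finset.sum_le_card_nsmul (Finset.univ.erase i)
        (fun j => (X ∩ W j).card + (Y ∩ W j).card) w (fun j _ => hxyw j)
      simpa using this
    have h5 : (Finset.univ.erase i).card + 1 = k := by
      rw [Finset.card_erase_of_mem (Finset.mem_univ i), Finset.card_univ, Fintype.card_fin]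
      omega
    have h6 : k * w = (Finset.univ.erase i).card * w + w := by
      conv_lhs => rw [← h5]
      ring
    have h7 : ∑ j, ((X ∩ W j).card + (Y ∩ W j).card) = X.card + Y.card := by
      rw [Finset.sum_add_distrib, ← h1, ← h2]
    rw [hnkw] at hXYtotal
    linarith [hkll, hlsq1]
  set Ybig := Finset.univ.filter (fun i : Fin k => w ≤ 10 * (Y ∩ W i).card) with hYbig
  set Xbig := Finset.univ.filter (fun i : Fin k => w ≤ 10 * (X ∩ W i).card) with hXbig
  have hlsq : 4 ≤ ℓ ^ 2 := by
    calc (4:ℕ) = 2 * 2 := rfl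
    _ ≤ ℓ * ℓ := Nat.mul_le_mul hl2 hl2
    _ = ℓ ^ 2 := (sq ℓ).symm
  have hcoverbig : ∀ i, i ∈ Ybig ∨ i ∈ Xbig := by
    intro i
    by_contra hcon
    push_neg at hcon
    obtain ⟨h1, h2⟩ := hcon
    simp only [hYbig, hXbig, Finset.mem_filter, Finset.mem_univ, true_and, not_le] at h1 h2
    have := hpp i
    linarith [hwbig]
  have hkpos : 0 < k := by omega
  have hcardfilternot : ∀ p : Fin k → Prop, ∀ hp : DecidablePred p,
      (Finset.univ.filter p).card ≤ k := by
    intro p hp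
    calc (Finset.univ.filter p).card ≤ (Finset.univ : Finset (Fin k)).card :=
      Finset.card_le_card (Finset.filter_subset _ _)
    _ = k := by rw [Finset.card_univ, Fintype.card_fin]
  have hYbigcard : k ≤ 10 * Ybig.card := by
    by_contra hcon
    push_neg at hcon
    have h2 : Y.card = ∑ i, (Y ∩ W i).card := hsum Y
    have hsplit := Finset.sum_filter_add_sum_filter_not Finset.univ
      (fun i : Fin k => w ≤ 10 * (Y ∩ W i).card) (fun i => (Y ∩ W i).card)
    rw [← hYbig] at hsplit
    have hs1 : ∑ i ∈ Ybig, (Y ∩ W i).card ≤ Ybig.card * w := by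
      have := Finset.sum_le_card_nsmul Ybig (fun i => (Y ∩ W i).card) w (fun i _ => hycap i)
      simpa using this
    have hs2 : 10 * ∑ i ∈ Finset.univ.filter (fun i : Fin k => ¬ (w ≤ 10 * (Y ∩ W i).card)),
        (Y ∩ W i).card ≤ k * w := by
      rw [Finset.mul_sum]
      calc ∑ i ∈ Finset.univ.filter (fun i : Fin k => ¬ (w ≤ 10 * (Y ∩ W i).card)),
            10 * (Y ∩ W i).card
          ≤ (Finset.univ.filter (fun i : Fin k => ¬ (w ≤ 10 * (Y ∩ W i).card))).card * w := by
            have := Finset.sum_le_card_nsmul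
              (Finset.univ.filter (fun i : Fin k => ¬ (w ≤ 10 * (Y ∩ W i).card)))
              (fun i => 10 * (Y ∩ W i).card) w
              (fun i hi => by
                simp only [Finset.mem_filter, not_le] at hi
                exact hi.2.le)
            simpa using this
        _ ≤ k * w := Nat.mul_le_mul_right w (hcardfilternot _ _)
    have hmul : (10 * Ybig.card + 1) * w ≤ k * w := Nat.mul_le_mul_right w (by omega)
    have hexp : (10 * Ybig.card + 1) * w = 10 * (Ybig.card * w) + w := by ring
    rw [hnkw] at hYlow
    linarith [hwbig, hlsq, hs1, hs2, hmul, hexp, h2, hsplit, hYlow]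
  have hXbigcard : k ≤ 10 * Xbig.card := by
    by_contra hcon
    push_neg at hcon
    have h2 : X.card = ∑ i, (X ∩ W i).card := hsum X
    have hsplit := Finset.sum_filter_add_sum_filter_not Finset.univ
      (fun i : Fin k => w ≤ 10 * (X ∩ W i).card) (fun i => (X ∩ W i).card)
    rw [← hXbig] at hsplit
    have hs1 : ∑ i ∈ Xbig, (X ∩ W i).card ≤ Xbig.card * w := by
      have := Finset.sum_le_card_nsmul Xbig (fun i => (X ∩ W i).card) w (fun i _ => hxcap i)
      simpa using this
    have hs2 : 10 * ∑ i ∈ Finset.univ.filter (fun i : Fin k => ¬ (w ≤ 10 * (X ∩ W i).card)),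
        (X ∩ W i).card ≤ k * w := by
      rw [Finset.mul_sum]
      calc ∑ i ∈ Finset.univ.filter (fun i : Fin k => ¬ (w ≤ 10 * (X ∩ W i).card)),
            10 * (X ∩ W i).card
          ≤ (Finset.univ.filter (fun i : Fin k => ¬ (w ≤ 10 * (X ∩ W i).card))).card * w := by
            have := Finset.sum_le_card_nsmul
              (Finset.univ.filter (fun i : Fin k => ¬ (w ≤ 10 * (X ∩ W i).card)))
              (fun i => 10 * (X ∩ W i).card) w
              (fun i hi => by
                simp only [Finset.mem_filter, not_le] at hi
                exact hi.2.le)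
            simpa using this
        _ ≤ k * w := Nat.mul_le_mul_right w (hcardfilternot _ _)
    have hmul : (10 * Xbig.card + 1) * w ≤ k * w := Nat.mul_le_mul_right w (by omega)
    have hexp : (10 * Xbig.card + 1) * w = 10 * (Xbig.card * w) + w := by ring
    have hkw2 : 2 * w ≤ k * w := Nat.mul_le_mul_right w hk
    rw [hnkw] at hXlow
    linarith [hwbig, hlsq, hs1, hs2, hmul, hexp, h2, hsplit, hXlow, hkw2]
  -- choose I
  have hXbigc : Finset.univ \ Xbig ⊆ Ybig := by
    intro i hi
    rcases hcoverbig i with h | h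
    · exact h
    · exact absurd h (Finset.mem_sdiff.1 hi).2
  have hYbigk : (k + 9) / 10 ≤ Ybig.card := by omega
  have hqle : max ((Finset.univ \ Xbig).card) ((k + 9) / 10) ≤ Ybig.card :=
    max_le (Finset.card_le_card hXbigc) hYbigk
  obtain ⟨I, hI1, hI2, hI3⟩ := Finset.exists_subsuperset_card_eq hXbigc
    (le_max_left _ _) hqle
  refine ⟨I, Finset.univ \ I, Finset.disjoint_sdiff, Finset.union_sdiff_of_subset
    (Finset.subset_univ I), ?_, ?_, ?_⟩
  · have : (k + 9) / 10 ≤ I.card := hI3 ▸ le_max_right _ _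
    omega
  · have hcardU : (Finset.univ : Finset (Fin k)).card = k := by
      rw [Finset.card_univ, Fintype.card_fin]
    rw [Finset.card_sdiff_of_subset (Finset.subset_univ I), hcardU]
    have hIk : I.card ≤ k := by
      calc I.card ≤ Ybig.card := Finset.card_le_card hI2
      _ ≤ k := hcardfilternot _ _
    rcases max_choice ((Finset.univ \ Xbig).card) ((k + 9) / 10) with hmax | hmax
    · rw [hmax] at hI3
      have hXc : (Finset.univ \ Xbig).card = k - Xbig.card := by
        rw [Finset.card_sdiff_of_subset (Finset.subset_univ Xbig), hcardU]
      have hXk : Xbig.card ≤ k := hcardfilternot _ _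
      omega
    · rw [hmax] at hI3
      omega
  · refine ⟨fun i => if i ∈ I then Y ∩ W i else X ∩ W i, ?_, ?_, ?_⟩
    · intro i
      by_cases hi : i ∈ I <;> simp [hi, Finset.inter_subset_right]
    · intro i
      rw [hsize i]
      by_cases hi : i ∈ I
      · simp only [if_pos hi]
        have : i ∈ Ybig := hI2 hi
        simpa [hYbig] using this
      · simp only [if_neg hi]
        have hiX : i ∈ Xbig := by
          by_contra hiX
          exact hi (hI1 (Finset.mem_sdiff.2 ⟨Finset.mem_univ i, hiX⟩))
        simpa [hXbig] using hiX
    · intro i hi j hj a' ha' b' hb'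
      have hjI : j ∉ I := (Finset.mem_sdiff.1 hj).2
      simp only [if_pos hi] at ha'
      simp only [if_neg hjI] at hb'
      exact hdom a' (Finset.mem_inter.1 ha').1 b' (Finset.mem_inter.1 hb').1
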